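/- Let π be a torsion-free group and let Γ be a separable subgroup of π. Suppose that there are only finitely many right cosets Γg with g ∈ π ∖ Γ for which the intersection Γ ∩ g⁻¹Γg is infinite. Then there exists a finite-index subgroup π' of π with Γ ≤ π' such that Γ is malnormal in π', i.e., Γ ∩ g⁻¹Γg = {1} for every g ∈ π' ∖ Γ. -/

import Mathlib

/-- A subgroup `S` of a group `G` is separable if for every `g ∈ G` with `g ∉ S` there
is a homomorphism `φ` from `G` to a finite group with `φ g ∉ φ(S)`. -/
def IsSeparableSubgroup {G : Type} [Group G] (S : Subgroup G) : Prop :=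
  ∀ g : G, g ∉ S → ∃ (Q : Type) (_ : Group Q) (_ : Finite Q) (φ : G →* Q),
    φ g ∉ S.map φ

/-- The old Mathlib notion: a monoid is torsion-free if no nontrivial element has finite order. -/
def Monoid.IsTorsionFree (G : Type*) [Monoid G] : Prop :=
  ∀ g : G, g ≠ 1 → ¬IsOfFinOrder g

/-- Let `π` be a torsion-free group and `Γ` a separable subgroup.  Suppose that the
elements `g ∈ π ∖ Γ` for which `Γ ∩ g⁻¹Γg` is infinite lie in only finitely many right
cosets `Γ·t` of `Γ`.  Then there is a finite-index subgroup `π'` of `π` containing `Γ`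
in which `Γ` is malnormal: `Γ ∩ g⁻¹Γg = {1}` for every `g ∈ π' ∖ Γ`. -/
theorem virtually_malnormal_of_separable_finite_width
    {π : Type} [Group π] (htf : Monoid.IsTorsionFree π)
    (Γ : Subgroup π) (hsep : IsSeparableSubgroup Γ)
    (hfin : ∃ T : Finset π, ∀ g : π, g ∉ Γ →
      Set.Infinite {x : π | x ∈ Γ ∧ g * x * g⁻¹ ∈ Γ} → ∃ t ∈ T, g * t⁻¹ ∈ Γ) :
    ∃ π' : Subgroup π, π'.FiniteIndex ∧ Γ ≤ π' ∧
      ∀ g ∈ π', g ∉ Γ → ∀ x ∈ Γ, g * x * g⁻¹ ∈ Γ → x = 1 := by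
  obtain ⟨T, hT⟩ := hfin
  -- for each t, a finite-index subgroup containing Γ and excluding t (if t ∉ Γ)
  have key : ∀ t : π, ∃ K : Subgroup π, K.FiniteIndex ∧ Γ ≤ K ∧ (t ∉ Γ → t ∉ K) := by
    intro t
    by_cases ht : t ∈ Γ
    · exact ⟨⊤, inferInstance, le_top, fun h => absurd ht h⟩
    · obtain ⟨Q, _, _, φ, hφ⟩ := hsep t ht
      refine ⟨(Γ.map φ).comap φ, ?_, fun x hx => Subgroup.mem_comap.2 ?_, fun _ h => hφ h⟩
      · constructor
        rw [Subgroup.index_comap]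
        exact Subgroup.FiniteIndex.index_ne_zero
      · exact Subgroup.mem_map_of_mem φ hx
  choose K hKfi hKΓ hKt using key
  refine ⟨⨅ t ∈ T, K t, ?_, le_iInf fun t => le_iInf fun _ => hKΓ t, ?_⟩
  · exact Subgroup.finiteIndex_iInf' _ fun t _ => hKfi t
  · intro g hg hgΓ x hx hgx
    by_contra hx1
    have hinf : Set.Infinite {y : π | y ∈ Γ ∧ g * y * g⁻¹ ∈ Γ} := by
      apply Set.infinite_of_injective_forall_mem (f := fun n : ℤ => x ^ n)
      case hi => exact injective_zpow_iff_not_isOfFinOrder.2 (htf x hx1)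
      case hf =>
        intro n
        refine ⟨Subgroup.zpow_mem Γ hx n, ?_⟩
        have h2 : g * x ^ n * g⁻¹ = (g * x * g⁻¹) ^ n := conj_zpow.symm
        rw [h2]
        exact Subgroup.zpow_mem Γ hgx n
    obtain ⟨t, htT, hgt⟩ := hT g hgΓ hinf
    have htΓ : t ∉ Γ := fun h => hgΓ (by simpa using Subgroup.mul_mem Γ hgt h)
    have hgK : g ∈ K t := by
      simp only [Subgroup.mem_iInf] at hg
      exact hg t htT
    have : t ∈ K t := by
      have := Subgroup.mul_mem (K t) (Subgroup.inv_mem _ (hKΓ t hgt)) hgK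
      simpa [mul_assoc] using this
    exact hKt t htΓ this
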